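/- If the run from o reaches a dead end, then it never reaches d; hence the run fails to terminate if and only if it reaches a dead end. -/

import Mathlib

open scoped Classical

/-- A switch graph: every vertex has an even successor `s0 v` and an odd successor `s1 v`. -/
structure SwitchGraph (V : Type) where
  s0 : V → V
  s1 : V → V

namespace SwitchGraph

variable {V : Type}

/-- The successor of `v` along the edge of parity `b` (`false` = even, `true` = odd). -/
def succ (G : SwitchGraph V) (v : V) (b : Bool) : V :=
  if b then G.s1 v else G.s0 v

/-- One step of the run: move to the currently active successor and flip the switch. -/
def step [DecidableEq V] (G : SwitchGraph V) (p : V × (V → Bool)) : V × (V → Bool) :=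
  (G.succ p.1 (p.2 p.1), Function.update p.2 p.1 (!p.2 p.1))

/-- The state of the run after `n` steps, starting at `o` with all switches even,
stopping (freezing) upon reaching `d`. -/
def run [DecidableEq V] (G : SwitchGraph V) (o d : V) (n : ℕ) : V × (V → Bool) :=
  (fun p => if p.1 = d then p else G.step p)^[n] (o, fun _ => false)

/-- The run from `o` terminates at `d`. -/
def Terminates [DecidableEq V] (G : SwitchGraph V) (o d : V) : Prop :=
  ∃ n, (G.run o d n).1 = d

/-- Number of traversals of the outgoing edge of `v` of parity `b` during
the first `N` steps of the run. -/
def traversals [DecidableEq V] (G : SwitchGraph V) (o d : V) (N : ℕ) (v : V) (b : Bool) : ℕ :=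
  ((Finset.range N).filter
    (fun n => (G.run o d n).1 = v ∧ v ≠ d ∧ (G.run o d n).2 v = b)).card

/-- Total weight on edges leaving `v`. -/
def outflow {M : Type} [AddCommMonoid M] (x : V → Bool → M) (v : V) : M :=
  x v false + x v true

/-- Total weight on edges entering `v`. -/
def inflow [Fintype V] [DecidableEq V] (G : SwitchGraph V) {M : Type} [AddCommMonoid M]
    (x : V → Bool → M) (v : V) : M :=
  ∑ u : V, ∑ b : Bool, if G.succ u b = v then x u b else 0

/-- A switching flow: flow conservation of value 1 from `o` to `d`, together with the
balancing condition `x v true ≤ x v false ≤ x v true + 1` at every vertex. -/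
def IsSwitchingFlow [Fintype V] [DecidableEq V] (G : SwitchGraph V) (o d : V)
    (x : V → Bool → ℕ) : Prop :=
  (∀ v, outflow x v + (if v = d then 1 else 0) = G.inflow x v + (if v = o then 1 else 0)) ∧
  (∀ v, x v true ≤ x v false ∧ x v false ≤ x v true + 1)

/-- The edge relation of the underlying directed graph `(V, E)`. -/
def stepRel (G : SwitchGraph V) (a b : V) : Prop :=
  G.s0 a = b ∨ G.s1 a = b

/-- A dead end: a vertex with no directed path to `d` in `(V, E)`. -/
def DeadEnd (G : SwitchGraph V) (d w : V) : Prop :=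
  ¬ Relation.ReflTransGen G.stepRel w d

/-- There is a directed walk of length `k` from `w` to `d` in `(V, E)`. -/
def Chain (G : SwitchGraph V) (w d : V) (k : ℕ) : Prop :=
  ∃ f : ℕ → V, f 0 = w ∧ f k = d ∧ ∀ i < k, G.stepRel (f i) (f (i + 1))

end SwitchGraph

open SwitchGraph

namespace SwitchGraph

variable {V : Type}

variable [DecidableEq V] (G : SwitchGraph V) (o d : V)

lemma run_succ' (n : ℕ) :
    G.run o d (n+1) = if (G.run o d n).1 = d then G.run o d n else G.step (G.run o d n) := by
  unfold run; exact Function.iterate_succ_apply' _ _ _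

lemma run_freeze' {n m : ℕ} (hnm : n ≤ m) (h : (G.run o d n).1 = d) :
    G.run o d m = G.run o d n := by
  induction m, hnm using Nat.le_induction with
  | base => rfl
  | succ m hm ih => rw [run_succ', ih, if_pos h]

lemma run_rel' (n : ℕ) :
    Relation.ReflTransGen G.stepRel (G.run o d n).1 (G.run o d (n+1)).1 := by
  rw [run_succ']
  split
  · exact Relation.ReflTransGen.refl
  · refine Relation.ReflTransGen.single ?_
    unfold step succ stepRel
    dsimp only
    split
    · right; rfl
    · left; rfl

lemma run_rel_le' {n m : ℕ} (hnm : n ≤ m) :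
    Relation.ReflTransGen G.stepRel (G.run o d n).1 (G.run o d m).1 := by
  induction m, hnm using Nat.le_induction with
  | base => exact Relation.ReflTransGen.refl
  | succ m hm ih => exact ih.trans (run_rel' G o d m)

lemma run2_succ' (hd : ∀ n, (G.run o d n).1 ≠ d) (n : ℕ) (v : V) :
    (G.run o d (n+1)).2 v =
      if v = (G.run o d n).1 then !(G.run o d n).2 v else (G.run o d n).2 v := by
  rw [run_succ', if_neg (hd n)]
  unfold step
  dsimp only
  rw [Function.update_apply]
  split
  · next h => rw [h]
  · rfl

lemma run1_succ' (hd : ∀ n, (G.run o d n).1 ≠ d) (n : ℕ) :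
    (G.run o d (n+1)).1 = G.succ (G.run o d n).1 ((G.run o d n).2 (G.run o d n).1) := by
  rw [run_succ', if_neg (hd n)]; rfl

lemma run2_const' (hd : ∀ n, (G.run o d n).1 ≠ d) (v : V) {n m : ℕ} (hnm : n ≤ m)
    (h : ∀ k, n ≤ k → k < m → (G.run o d k).1 ≠ v) :
    (G.run o d m).2 v = (G.run o d n).2 v := by
  induction m, hnm using Nat.le_induction with
  | base => rfl
  | succ m hm ih =>
    rw [run2_succ' G o d hd m v,
      if_neg (fun e => h m hm (Nat.lt_succ_self m) e.symm)]
    exact ih (fun k hk hk' => h k hk (Nat.lt_succ_of_lt hk'))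

end SwitchGraph

/-- If the run reaches a dead end it never reaches `d`; hence nontermination is equivalent
to reaching a dead end. -/
theorem stmt11 {V : Type} [Fintype V] [DecidableEq V] (G : SwitchGraph V) (o d : V)
    (hod : o ≠ d) :
    ((∃ N, G.DeadEnd d (G.run o d N).1) → ¬ G.Terminates o d) ∧
      (¬ G.Terminates o d ↔ ∃ N, G.DeadEnd d (G.run o d N).1) := by
  have fwd : (∃ N, G.DeadEnd d (G.run o d N).1) → ¬ G.Terminates o d := by
    rintro ⟨N, hN⟩ ⟨n, hn⟩
    have h1 : (G.run o d (max N n)).1 = d := by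
      rw [run_freeze' G o d (le_max_right N n) hn, hn]
    have h2 := run_rel_le' G o d (le_max_left N n)
    rw [h1] at h2
    exact hN h2
  refine ⟨fwd, ⟨?_, fwd⟩⟩
  intro hT
  have hd : ∀ n, (G.run o d n).1 ≠ d := by
    intro n hn; exact hT ⟨n, hn⟩
  -- some vertex is visited infinitely often
  set Inf : V → Prop := fun v => ∀ N, ∃ n, N ≤ n ∧ (G.run o d n).1 = v with hInfdef
  obtain ⟨v, hv⟩ : ∃ v, Inf v := by
    obtain ⟨v, hv⟩ := Finite.exists_infinite_fiber (fun n => (G.run o d n).1)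
    refine ⟨v, fun N => ?_⟩
    have : ((fun n => (G.run o d n).1) ⁻¹' {v}).Infinite := Set.infinite_coe_iff.mp hv
    obtain ⟨m, hm, hm'⟩ := this.exists_gt N
    exact ⟨m, hm'.le, hm⟩
  -- the switch at an infinitely-visited vertex flips between consecutive visits
  have flip : ∀ (w : V) (n : ℕ), (G.run o d n).1 = w → Inf w →
      ∃ m, n < m ∧ (G.run o d m).1 = w ∧ (G.run o d m).2 w = !(G.run o d n).2 w := by
    intro w n hn hw
    have hex : ∃ m, n < m ∧ (G.run o d m).1 = w := by
      obtain ⟨m, hm, hm'⟩ := hw (n+1)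
      exact ⟨m, hm, hm'⟩
    classical
    set m := Nat.find hex with hmdef
    obtain ⟨hnm, hmw⟩ := Nat.find_spec hex
    refine ⟨m, hnm, hmw, ?_⟩
    have hmin : ∀ k, n + 1 ≤ k → k < m → (G.run o d k).1 ≠ w := by
      intro k hk hk' he
      exact Nat.find_min hex hk' ⟨hk, he⟩
    rw [run2_const' G o d hd w hnm hmin, run2_succ' G o d hd n w, if_pos hn.symm]
  -- hence both switch positions occur infinitely often at such a vertex
  have both : ∀ (w : V), Inf w → ∀ (b : Bool) (N : ℕ),
      ∃ n, N ≤ n ∧ (G.run o d n).1 = w ∧ (G.run o d n).2 w = b := by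
    intro w hw b N
    obtain ⟨n, hn, hn'⟩ := hw N
    by_cases hb : (G.run o d n).2 w = b
    · exact ⟨n, hn, hn', hb⟩
    · obtain ⟨m, hm, hm', hm''⟩ := flip w n hn' hw
      refine ⟨m, le_trans hn hm.le, hm', ?_⟩
      rw [hm'']
      cases b <;> simp_all
  -- Inf is closed under successors
  have closed : ∀ (w : V), Inf w → ∀ b, Inf (G.succ w b) := by
    intro w hw b N
    obtain ⟨n, hn, hn', hn''⟩ := both w hw b N
    refine ⟨n + 1, le_trans hn (Nat.le_succ n), ?_⟩
    rw [run1_succ' G o d hd n, hn', hn'']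
  have closedRel : ∀ (w u : V), Inf w → Relation.ReflTransGen G.stepRel w u → Inf u := by
    intro w u hw h
    induction h with
    | refl => exact hw
    | tail hab hbc ih =>
      rcases hbc with h0 | h1
      · exact h0 ▸ closed _ ih false
      · exact h1 ▸ closed _ ih true
  obtain ⟨N, _, hN⟩ := hv 0
  refine ⟨N, fun hreach => ?_⟩
  obtain ⟨n, _, hn⟩ := closedRel _ _ hv (hN ▸ hreach) 0
  exact hd n hn
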